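/- Let Γ be a group, Λ ≤ Γ a subgroup, and ψ : Γ → ℝ a function of conditionally negative type that is unbounded on Λ. Let t > 0 and let (π, H) be a unitary representation of Γ with a cyclic unit vector ξ ∈ H (i.e. the closed linear span of {π(γ)ξ : γ ∈ Γ} is H) satisfying ⟨ξ, π(γ)ξ⟩ = exp(−t ψ(γ)) for all γ ∈ Γ. Then the restriction of π to Λ is weakly mixing: for every ε > 0 and every finite list of vectors η_1, …, η_n ∈ H there exists ρ ∈ Λ such that |⟨η_i, π(ρ) η_j⟩| ≤ ε for all 1 ≤ i, j ≤ n. -/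

import Mathlib

open scoped InnerProductSpace ComplexConjugate ComplexOrder BigOperators

section Defs

variable {Γ : Type} [Group Γ]

/-- A complex-valued function of positive type on a group. -/
def IsPosType (φ : Γ → ℂ) : Prop :=
  ∀ (n : ℕ), 1 ≤ n → ∀ (γ : Fin n → Γ) (c : Fin n → ℂ),
    0 ≤ ∑ i, ∑ j, conj (c i) * c j * φ ((γ i)⁻¹ * γ j)

/-- A real-valued function of positive type on a group. -/
def IsRealPosType (φ : Γ → ℝ) : Prop :=
  (∀ γ : Γ, φ γ⁻¹ = φ γ) ∧
  ∀ (n : ℕ), 1 ≤ n → ∀ (γ : Fin n → Γ) (c : Fin n → ℝ),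
    0 ≤ ∑ i, ∑ j, c i * c j * φ ((γ i)⁻¹ * γ j)

/-- A complex-valued function of conditionally negative type on a group. -/
def IsCondNegType (ψ : Γ → ℂ) : Prop :=
  ψ 1 = 0 ∧ (∀ γ : Γ, ψ γ⁻¹ = conj (ψ γ)) ∧
  ∀ (n : ℕ), 2 ≤ n → ∀ (γ : Fin n → Γ) (c : Fin n → ℂ), (∑ i, c i) = 0 →
    ∑ i, ∑ j, conj (c i) * c j * ψ ((γ i)⁻¹ * γ j) ≤ 0

/-- A real-valued function of conditionally negative type on a group. -/
def IsRealCondNegType (ψ : Γ → ℝ) : Prop :=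
  ψ 1 = 0 ∧ (∀ γ : Γ, ψ γ⁻¹ = ψ γ) ∧
  ∀ (n : ℕ), 2 ≤ n → ∀ (γ : Fin n → Γ) (c : Fin n → ℝ), (∑ i, c i) = 0 →
    ∑ i, ∑ j, c i * c j * ψ ((γ i)⁻¹ * γ j) ≤ 0

/-- A function on Γ is Δ-(bi-)invariant if it is unchanged under left and right
multiplication by elements of Δ. -/
def IsInvariantUnder {α : Type*} (Δ : Subgroup Γ) (ψ : Γ → α) : Prop :=
  ∀ d₀ ∈ Δ, ∀ d₁ ∈ Δ, ∀ γ : Γ, ψ (d₀ * γ * d₁) = ψ γ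

/-- The triple Δ ≤ Λ ≤ Γ has property (T): every unitary representation of Γ with
almost invariant Δ-invariant unit vectors has a Λ-invariant unit vector. -/
def HasPropertyT (Δ Λ : Subgroup Γ) : Prop :=
  ∀ (H : Type) [NormedAddCommGroup H] [InnerProductSpace ℂ H] [CompleteSpace H]
    (π : Γ →* (H ≃ₗᵢ[ℂ] H)),
    (∀ (F : Finset Γ) (ε : ℝ), 0 < ε →
      ∃ ξ : H, ‖ξ‖ = 1 ∧ (∀ d ∈ Δ, π d ξ = ξ) ∧ ∀ γ ∈ F, ‖π γ ξ - ξ‖ ≤ ε) →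
    ∃ η : H, ‖η‖ = 1 ∧ ∀ l ∈ Λ, π l η = η

end Defs

section Aux

lemma my_psi_nonneg {Γ : Type} [Group Γ] {ψ : Γ → ℝ} (hψ : IsRealCondNegType ψ) (g : Γ) :
    0 ≤ ψ g := by
  have h := hψ.2.2 2 le_rfl ![1, g] ![1, -1] (by simp)
  simp [Fin.sum_univ_two, hψ.1, hψ.2.1] at h
  linarith

lemma my_psi_quad {Γ : Type} [Group Γ] {ψ : Γ → ℝ} (hψ : IsRealCondNegType ψ) (x y : Γ) :
    (ψ x + ψ y - ψ (x⁻¹ * y))^2 ≤ 4 * (ψ x) * (ψ y) := by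
  have key : ∀ s : ℝ, 0 ≤ ψ x * (s * s) + (ψ x + ψ y - ψ (x⁻¹*y)) * s + ψ y := by
    intro s
    have h := hψ.2.2 3 (by norm_num) ![1, x, y] ![-(s+1), s, 1] (by simp [Fin.sum_univ_three])
    have hxy : ψ (y⁻¹ * x) = ψ (x⁻¹ * y) := by
      rw [← hψ.2.1 (y⁻¹*x)]; simp [mul_inv_rev]
    simp [Fin.sum_univ_three, hψ.1, hψ.2.1, hxy] at h
    nlinarith [h]
  have h2 := discrim_le_zero key
  rw [discrim] at h2
  nlinarith [h2]

lemma my_psi_sqrt_subadd {Γ : Type} [Group Γ] {ψ : Γ → ℝ} (hψ : IsRealCondNegType ψ) (a b : Γ) :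
    Real.sqrt (ψ (a * b)) ≤ Real.sqrt (ψ a) + Real.sqrt (ψ b) := by
  have h := my_psi_quad hψ a⁻¹ b
  rw [inv_inv, hψ.2.1 a] at h
  have ha := my_psi_nonneg hψ a
  have hb := my_psi_nonneg hψ b
  have hsa := Real.sq_sqrt ha
  have hsb := Real.sq_sqrt hb
  have habs : |ψ a + ψ b - ψ (a * b)| ≤ 2 * Real.sqrt (ψ a) * Real.sqrt (ψ b) := by
    have hs : Real.sqrt ((ψ a + ψ b - ψ (a * b))^2) ≤ Real.sqrt (4 * ψ a * ψ b) :=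
      Real.sqrt_le_sqrt h
    rwa [Real.sqrt_sq_eq_abs,
      show (4 * ψ a * ψ b) = (2 * Real.sqrt (ψ a) * Real.sqrt (ψ b))^2 by
        rw [mul_pow, mul_pow, hsa, hsb]; ring,
      Real.sqrt_sq (by positivity)] at hs
  have h2 : ψ (a * b) ≤ (Real.sqrt (ψ a) + Real.sqrt (ψ b))^2 := by
    have h3 := (abs_le.mp habs).1
    nlinarith [hsa, hsb, h3]
  calc Real.sqrt (ψ (a * b)) ≤ Real.sqrt ((Real.sqrt (ψ a) + Real.sqrt (ψ b))^2) :=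
        Real.sqrt_le_sqrt h2
    _ = Real.sqrt (ψ a) + Real.sqrt (ψ b) := Real.sqrt_sq (by positivity)

lemma my_psi_lower {Γ : Type} [Group Γ] {ψ : Γ → ℝ} (hψ : IsRealCondNegType ψ) (x ρ y : Γ) :
    Real.sqrt (ψ ρ) - Real.sqrt (ψ x) - Real.sqrt (ψ y) ≤ Real.sqrt (ψ (x⁻¹ * ρ * y)) := by
  have h1 : Real.sqrt (ψ ρ) ≤ Real.sqrt (ψ x) + Real.sqrt (ψ (x⁻¹ * ρ * y)) + Real.sqrt (ψ y) := by
    have e : ρ = x * ((x⁻¹ * ρ * y) * y⁻¹) := by group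
    calc Real.sqrt (ψ ρ) = Real.sqrt (ψ (x * ((x⁻¹ * ρ * y) * y⁻¹))) := by rw [← e]
      _ ≤ Real.sqrt (ψ x) + Real.sqrt (ψ ((x⁻¹ * ρ * y) * y⁻¹)) := my_psi_sqrt_subadd hψ _ _
      _ ≤ Real.sqrt (ψ x) + (Real.sqrt (ψ (x⁻¹ * ρ * y)) + Real.sqrt (ψ y⁻¹)) := by
          linarith [my_psi_sqrt_subadd hψ (x⁻¹ * ρ * y) y⁻¹]
      _ = Real.sqrt (ψ x) + Real.sqrt (ψ (x⁻¹ * ρ * y)) + Real.sqrt (ψ y) := by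
          rw [hψ.2.1 y]; ring
  linarith

end Aux


/-- If ψ is of conditionally negative type and unbounded on Λ, then the GNS
representation of exp(-tψ) restricted to Λ is weakly mixing. -/
theorem stmt9 (Γ : Type) [Group Γ] (Λ : Subgroup Γ)
    (ψ : Γ → ℝ) (hψ : IsRealCondNegType ψ)
    (hub : ¬ ∃ C : ℝ, ∀ l ∈ Λ, |ψ l| ≤ C)
    (t : ℝ) (ht : 0 < t)
    (H : Type) [NormedAddCommGroup H] [InnerProductSpace ℂ H] [CompleteSpace H]
    (π : Γ →* (H ≃ₗᵢ[ℂ] H)) (ξ : H) (hξ : ‖ξ‖ = 1)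
    (hcyc : (Submodule.span ℂ (Set.range fun γ : Γ => π γ ξ)).topologicalClosure = ⊤)
    (hcorr : ∀ γ : Γ, ⟪ξ, π γ ξ⟫_ℂ = (Real.exp (-t * ψ γ) : ℂ)) :
    ∀ ε > (0 : ℝ), ∀ (n : ℕ) (η : Fin n → H),
      ∃ ρ ∈ Λ, ∀ i j : Fin n, ‖⟪η i, π ρ (η j)⟫_ℂ‖ ≤ ε := by
  intro ε hε n η
  have hnn : ∀ g : Γ, 0 ≤ ψ g := my_psi_nonneg hψ
  -- unboundedness
  have hub' : ∀ C : ℝ, ∃ ρ ∈ Λ, C < ψ ρ := by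
    push_neg at hub
    intro C
    obtain ⟨l, hl, h⟩ := hub C
    exact ⟨l, hl, by rwa [abs_of_nonneg (hnn l)] at h⟩
  -- multiplication rule
  have hmul : ∀ (x y : Γ) (v : H), π (x * y) v = π x (π y v) := by intro x y v; simp
  -- inner product formula
  have hip : ∀ a ρ b : Γ,
      ⟪π a ξ, π ρ (π b ξ)⟫_ℂ = (Real.exp (-t * ψ (a⁻¹ * (ρ * b))) : ℂ) := by
    intro a ρ b
    have h1 : π ρ (π b ξ) = π a (π (a⁻¹ * (ρ * b)) ξ) := by
      rw [← hmul, ← hmul, show a * (a⁻¹ * (ρ * b)) = ρ * b by group]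
    rw [h1, (π a).inner_map_map ξ (π (a⁻¹ * (ρ * b)) ξ), hcorr]
  -- norm bound
  set B : ℝ := 1 + ∑ i, ‖η i‖ with hBdef
  have hB1 : (1:ℝ) ≤ B := by
    have : (0:ℝ) ≤ ∑ i, ‖η i‖ := Finset.sum_nonneg fun i _ => norm_nonneg _
    simp [hBdef]; linarith
  have hB0 : (0:ℝ) < B := lt_of_lt_of_le one_pos hB1
  have hηB : ∀ i, ‖η i‖ ≤ B - 1 := by
    intro i
    have := Finset.single_le_sum (f := fun i => ‖η i‖) (fun i _ => norm_nonneg _)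
      (Finset.mem_univ i)
    simp [hBdef]; linarith
  set δ : ℝ := min 1 (ε / (8 * B)) with hδdef
  have hδpos : 0 < δ := lt_min one_pos (by positivity)
  have hδ1 : δ ≤ 1 := min_le_left _ _
  have hδε : δ ≤ ε / (8 * B) := min_le_right _ _
  -- approximation by span elements
  have happrox : ∀ i : Fin n, ∃ (m : ℕ) (c : Fin m → ℂ) (g : Fin m → Γ),
      ‖η i - ∑ k, c k • π (g k) ξ‖ < δ := by
    intro i
    have hv : η i ∈ closure (Submodule.span ℂ (Set.range fun γ : Γ => π γ ξ) : Set H) := by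
      have : η i ∈ (Submodule.span ℂ (Set.range fun γ : Γ => π γ ξ)).topologicalClosure := by
        rw [hcyc]; trivial
      exact this
    rw [Metric.mem_closure_iff] at hv
    obtain ⟨v, hvmem, hd⟩ := hv δ hδpos
    rw [SetLike.mem_coe, Submodule.mem_span_set'] at hvmem
    obtain ⟨m, c, wv, hw⟩ := hvmem
    refine ⟨m, c, fun k => (wv k).2.choose, ?_⟩
    have hveq : v = ∑ k, c k • π ((wv k).2.choose) ξ := by
      rw [← hw]
      refine Finset.sum_congr rfl fun k _ => ?_
      congr 1
      exact ((wv k).2.choose_spec).symm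
    rw [← hveq, ← dist_eq_norm]
    exact hd
  choose m c g hcg using happrox
  set w : Fin n → H := fun i => ∑ k, c i k • π (g i k) ξ with hwdef
  -- coefficient bound
  set C₀ : ℝ := 1 + ∑ i, ∑ k, ‖c i k‖ with hC₀def
  have hC₀1 : (1:ℝ) ≤ C₀ := by
    have : (0:ℝ) ≤ ∑ i, ∑ k, ‖c i k‖ :=
      Finset.sum_nonneg fun i _ => Finset.sum_nonneg fun k _ => (norm_nonneg _)
    simp [hC₀def]; linarith
  have hC₀0 : (0:ℝ) < C₀ := lt_of_lt_of_le one_pos hC₀1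
  have hCi : ∀ i, ∑ k, ‖c i k‖ ≤ C₀ := by
    intro i
    have := Finset.single_le_sum (f := fun i => ∑ k, ‖c i k‖)
      (fun i _ => Finset.sum_nonneg fun k _ => norm_nonneg _) (Finset.mem_univ i)
    simp only [hC₀def]; linarith
  -- sqrt-psi bound on the generators
  set M : ℝ := ∑ i, ∑ k, Real.sqrt (ψ (g i k)) with hMdef
  have hM0 : 0 ≤ M :=
    Finset.sum_nonneg fun i _ => Finset.sum_nonneg fun k _ => Real.sqrt_nonneg _
  have hgM : ∀ (i : Fin n) (k : Fin (m i)), Real.sqrt (ψ (g i k)) ≤ M := by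
    intro i k
    have h1 : Real.sqrt (ψ (g i k)) ≤ ∑ k', Real.sqrt (ψ (g i k')) :=
      Finset.single_le_sum (f := fun k' => Real.sqrt (ψ (g i k')))
        (fun k' _ => Real.sqrt_nonneg _) (Finset.mem_univ k)
    have h2 : ∑ k', Real.sqrt (ψ (g i k')) ≤ M :=
      Finset.single_le_sum (f := fun i => ∑ k', Real.sqrt (ψ (g i k')))
        (fun i' _ => Finset.sum_nonneg fun k' _ => Real.sqrt_nonneg _) (Finset.mem_univ i)
    linarith
  -- target exponential bound
  set E : ℝ := ε / (2 * C₀^2) with hEdef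
  have hE0 : 0 < E := by positivity
  set s₀ : ℝ := max 0 (-(Real.log E)/t) with hs₀def
  have hs₀0 : 0 ≤ s₀ := le_max_left _ _
  obtain ⟨ρ, hρΛ, hρψ⟩ := hub' ((2*M + Real.sqrt s₀)^2)
  refine ⟨ρ, hρΛ, ?_⟩
  have hfρ : 2*M + Real.sqrt s₀ < Real.sqrt (ψ ρ) := by
    have h1 : Real.sqrt ((2*M + Real.sqrt s₀)^2) < Real.sqrt (ψ ρ) :=
      Real.sqrt_lt_sqrt (by positivity) hρψ
    rwa [Real.sqrt_sq (by positivity)] at h1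
  -- key exponential estimate
  have hexp : ∀ a b : Γ, Real.sqrt (ψ a) ≤ M → Real.sqrt (ψ b) ≤ M →
      Real.exp (-t * ψ (a⁻¹ * (ρ * b))) ≤ E := by
    intro a b ha hb
    have hlow := my_psi_lower hψ a ρ b
    rw [mul_assoc] at hlow
    have h1 : Real.sqrt s₀ ≤ Real.sqrt (ψ (a⁻¹ * (ρ * b))) := by linarith
    have h2 : s₀ ≤ ψ (a⁻¹ * (ρ * b)) := by
      calc s₀ = Real.sqrt s₀ ^ 2 := (Real.sq_sqrt hs₀0).symm
        _ ≤ Real.sqrt (ψ (a⁻¹ * (ρ * b))) ^ 2 := by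
            apply pow_le_pow_left₀ (Real.sqrt_nonneg _) h1
        _ = ψ (a⁻¹ * (ρ * b)) := Real.sq_sqrt (hnn _)
    calc Real.exp (-t * ψ (a⁻¹ * (ρ * b))) ≤ Real.exp (-t * s₀) := by
          apply Real.exp_le_exp.2
          have := mul_le_mul_of_nonneg_left h2 ht.le
          linarith
      _ ≤ E := by
          have hle : -(Real.log E)/t ≤ s₀ := le_max_right _ _
          have h3 : -(Real.log E) ≤ s₀ * t := by rwa [div_le_iff₀ ht] at hle
          have h4 : -t * s₀ ≤ Real.log E := by
            have hc : s₀ * t = t * s₀ := mul_comm _ _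
            linarith
          calc Real.exp (-t * s₀) ≤ Real.exp (Real.log E) := Real.exp_le_exp.2 h4
            _ = E := Real.exp_log hE0
  -- bound on inner products of the approximants
  have hwbound : ∀ i j : Fin n, ‖⟪w i, π ρ (w j)⟫_ℂ‖ ≤ ε / 2 := by
    intro i j
    have hinner : ⟪w i, π ρ (w j)⟫_ℂ =
        ∑ k, ∑ l, conj (c i k) * c j l * ⟪π (g i k) ξ, π ρ (π (g j l) ξ)⟫_ℂ := by
      simp only [hwdef, map_sum, map_smul, sum_inner, inner_sum, inner_smul_left,
        inner_smul_right]
      simp only [Finset.mul_sum]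
      rw [Finset.sum_comm]
      exact Finset.sum_congr rfl fun k _ => Finset.sum_congr rfl fun l _ => by ring
    rw [hinner]
    calc ‖∑ k, ∑ l, conj (c i k) * c j l * ⟪π (g i k) ξ, π ρ (π (g j l) ξ)⟫_ℂ‖
        ≤ ∑ k, ∑ l, ‖conj (c i k) * c j l * ⟪π (g i k) ξ, π ρ (π (g j l) ξ)⟫_ℂ‖ := by
          refine le_trans (norm_sum_le _ _) ?_
          exact Finset.sum_le_sum fun k _ => norm_sum_le _ _
      _ ≤ ∑ k, ∑ l, ‖c i k‖ * ‖c j l‖ * E := by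
          refine Finset.sum_le_sum fun k _ => Finset.sum_le_sum fun l _ => ?_
          rw [norm_mul, norm_mul, Complex.norm_conj, hip]
          rw [Complex.norm_real, Real.norm_eq_abs, abs_of_pos (Real.exp_pos _)]
          exact mul_le_mul_of_nonneg_left (hexp _ _ (hgM i k) (hgM j l))
            (by positivity)
      _ = (∑ k, ‖c i k‖) * (∑ l, ‖c j l‖) * E := by
          rw [Finset.sum_mul_sum, Finset.sum_mul]
          exact Finset.sum_congr rfl fun k _ => by rw [Finset.sum_mul]
      _ ≤ C₀ * C₀ * E := by
          apply mul_le_mul_of_nonneg_right _ (le_of_lt hE0)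
          exact mul_le_mul (hCi i) (hCi j)
            (Finset.sum_nonneg fun l _ => norm_nonneg _) (le_of_lt hC₀0)
      _ = ε / 2 := by
          rw [hEdef]; field_simp
  -- final triangle inequality
  intro i j
  have hsplit : ⟪η i, π ρ (η j)⟫_ℂ =
      ⟪η i - w i, π ρ (η j)⟫_ℂ + ⟪w i, π ρ (η j) - π ρ (w j)⟫_ℂ + ⟪w i, π ρ (w j)⟫_ℂ := by
    rw [inner_sub_left, inner_sub_right]; ring
  have hwi : ‖w i‖ ≤ B := by
    have h1 : ‖w i‖ ≤ ‖η i‖ + ‖η i - w i‖ := by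
      have := norm_sub_norm_le (η i) (w i)
      have h2 := norm_sub_rev (η i) (w i)
      calc ‖w i‖ = ‖η i - (η i - w i)‖ := by congr 1; abel
        _ ≤ ‖η i‖ + ‖η i - w i‖ := norm_sub_le _ _
    have := hcg i
    have := hηB i
    linarith
  have t1 : ‖⟪η i - w i, π ρ (η j)⟫_ℂ‖ ≤ δ * B := by
    calc ‖⟪η i - w i, π ρ (η j)⟫_ℂ‖ ≤ ‖η i - w i‖ * ‖π ρ (η j)‖ := by
          exact norm_inner_le_norm _ _
      _ = ‖η i - w i‖ * ‖η j‖ := by rw [(π ρ).norm_map]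
      _ ≤ δ * B := by
          apply mul_le_mul (le_of_lt (hcg i)) (le_trans (hηB j) (by linarith))
            (norm_nonneg _) (le_of_lt hδpos)
  have t2 : ‖⟪w i, π ρ (η j) - π ρ (w j)⟫_ℂ‖ ≤ B * δ := by
    calc ‖⟪w i, π ρ (η j) - π ρ (w j)⟫_ℂ‖ ≤ ‖w i‖ * ‖π ρ (η j) - π ρ (w j)‖ := by
          exact norm_inner_le_norm _ _
      _ = ‖w i‖ * ‖η j - w j‖ := by rw [← map_sub, (π ρ).norm_map]
      _ ≤ B * δ := mul_le_mul hwi (le_of_lt (hcg j)) (norm_nonneg _) (le_of_lt hB0)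
  calc ‖⟪η i, π ρ (η j)⟫_ℂ‖
      ≤ ‖⟪η i - w i, π ρ (η j)⟫_ℂ‖ + ‖⟪w i, π ρ (η j) - π ρ (w j)⟫_ℂ‖
        + ‖⟪w i, π ρ (w j)⟫_ℂ‖ := by
        rw [hsplit]
        refine le_trans (norm_add_le _ _) ?_
        exact add_le_add_left (norm_add_le _ _) _
    _ ≤ δ * B + B * δ + ε / 2 := by
        exact add_le_add (add_le_add t1 t2) (hwbound i j)
    _ ≤ ε := by
        have h8 : δ * B ≤ ε / 8 := by
          have hBne : B ≠ 0 := ne_of_gt hB0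
          calc δ * B ≤ ε / (8 * B) * B := mul_le_mul_of_nonneg_right hδε (le_of_lt hB0)
            _ = ε / 8 := by field_simp
        linarith
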